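/- Given transitive unimodal permutations δ_1 ∈ Δ_k and δ_2 ∈ Δ_ℓ with peaks m_1, m_2, there exists exactly one subset J ⊆ {1,...,k+ℓ} with |J| = k such that δ_1 ⊕_J δ_2 is unimodal and Ω_J(m_1) < Ω̄_J(m_2). -/

import Mathlib

/-- `δ` is unimodal with peak `m`: strictly increasing on `{0,...,m}` and
strictly decreasing on `{m,...,n-1}`. -/
def IsUnimodalPeak {n : ℕ} (δ : Equiv.Perm (Fin n)) (m : Fin n) : Prop :=
  (∀ a b : Fin n, a < b → b ≤ m → δ a < δ b) ∧
  (∀ a b : Fin n, m ≤ a → a < b → δ b < δ a)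

/-- A permutation of `Fin n` is unimodal if it has a peak. -/
def IsUnimodal {n : ℕ} (δ : Equiv.Perm (Fin n)) : Prop :=
  ∃ m, IsUnimodalPeak δ m

/-- A permutation is transitive (a single `n`-cycle) if every point can be
mapped to every other point by iteration. -/
def IsTransitive {n : ℕ} (δ : Equiv.Perm (Fin n)) : Prop :=
  ∀ x y : Fin n, ∃ i : ℕ, (δ ^ i) x = y

/-- The unique increasing map `Ω_J` from `Fin k` onto the subset `J` of size `k`. -/
def omegaMap {n k : ℕ} (J : Finset (Fin n)) (h : J.card = k) : Fin k → Fin n :=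
  fun a => (J.orderIsoOfFin h a : Fin n)

namespace Thm3

/-! ### Boolean sequences and the twisted lexicographic order -/

def shiftSeq (u : ℕ → Bool) : ℕ → Bool := fun i => u (i + 1)

def countB (u : ℕ → Bool) (i : ℕ) : ℕ := ((Finset.range i).filter fun j => u j = false).card

/-- Twisted lexicographic (strict) order: at the first difference, the sequence
whose entry is `true` (side `A`) is smaller iff the number of previous `false`s
(side `B`) is even. -/
def TL (u v : ℕ → Bool) : Prop :=
  ∃ i, (∀ j, j < i → u j = v j) ∧ u i ≠ v i ∧ (u i = true ↔ Even (countB u i))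

lemma countB_zero (u : ℕ → Bool) : countB u 0 = 0 := by simp [countB]

lemma countB_succ (u : ℕ → Bool) (i : ℕ) :
    countB u (i + 1) = countB u i + (if u i = false then 1 else 0) := by
  unfold countB
  rw [Finset.range_add_one, Finset.filter_insert]
  split
  · rw [Finset.card_insert_of_notMem (by simp)]
  · simp

lemma countB_shift (u : ℕ → Bool) (i : ℕ) :
    countB u (i + 1) = (if u 0 = false then 1 else 0) + countB (shiftSeq u) i := by
  induction i with
  | zero => simp [countB_succ, countB_zero, Nat.add_comm]
  | succ n ih =>
      rw [countB_succ, ih, countB_succ]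
      have : shiftSeq u n = u (n + 1) := rfl
      rw [this, Nat.add_assoc]

lemma countB_congr {u v : ℕ → Bool} {i : ℕ} (h : ∀ j, j < i → u j = v j) :
    countB u i = countB v i := by
  unfold countB
  congr 1
  apply Finset.filter_congr
  intro j hj
  rw [h j (Finset.mem_range.1 hj)]

lemma bool_ne_iff {a b : Bool} : a ≠ b ↔ (a = true ↔ b = false) := by
  cases a <;> cases b <;> simp

lemma TL_firstdiff_eq {u v : ℕ → Bool} {i i' : ℕ}
    (h1 : ∀ j, j < i → u j = v j) (h2 : u i ≠ v i)
    (h1' : ∀ j, j < i' → u j = v j) (h2' : u i' ≠ v i') : i = i' := by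
  rcases lt_trichotomy i i' with h | h | h
  · exact absurd (h1' i h) h2
  · exact h
  · exact absurd (h1 i' h) h2'

lemma TL_asymm {u v : ℕ → Bool} (h : TL u v) : ¬ TL v u := by
  rintro ⟨i', p', d', c'⟩
  obtain ⟨i, p, d, c⟩ := h
  have hii : i = i' := TL_firstdiff_eq p d (fun j hj => (p' j hj).symm) (fun h => d' h.symm)
  subst hii
  have hc : countB v i = countB u i := countB_congr (fun j hj => (p j hj).symm)
  rw [hc] at c'
  cases hu : u i <;> cases hv : v i
  · exact d (hu.trans hv.symm)
  · rw [hu] at c; rw [hv] at c'; simp at c c'; exact (Nat.not_even_iff_odd.mpr c) c'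
  · rw [hu] at c; rw [hv] at c'; simp at c c'; exact (Nat.not_even_iff_odd.mpr c') c
  · exact d (hu.trans hv.symm)

lemma TL_total {u v : ℕ → Bool} (h : u ≠ v) : TL u v ∨ TL v u := by
  have hne : ∃ i, u i ≠ v i := Function.ne_iff.1 h
  classical
  set i := Nat.find hne with hi
  have d : u i ≠ v i := Nat.find_spec hne
  have p : ∀ j, j < i → u j = v j := fun j hj => by
    by_contra hc; exact Nat.find_min hne hj hc
  by_cases hc : u i = true ↔ Even (countB u i)
  · exact Or.inl ⟨i, p, d, hc⟩
  · right
    refine ⟨i, fun j hj => (p j hj).symm, fun h => d h.symm, ?_⟩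
    have hcc : countB v i = countB u i := countB_congr (fun j hj => (p j hj).symm)
    rw [hcc]
    cases hu : u i <;> cases hv : v i <;> simp_all

lemma TL_trans {u v w : ℕ → Bool} (huv : TL u v) (hvw : TL v w) : TL u w := by
  obtain ⟨i, p, d, c⟩ := huv
  obtain ⟨i', p', d', c'⟩ := hvw
  rcases lt_trichotomy i i' with h | h | h
  · exact ⟨i, fun j hj => (p j hj).trans (p' j (hj.trans h)), by rw [← p' i h]; exact d, c⟩
  · subst h
    exfalso
    have hcc : countB v i = countB u i := countB_congr (fun j hj => (p j hj).symm)
    rw [hcc] at c'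
    cases hu : u i <;> cases hv : v i
    · exact d (hu.trans hv.symm)
    · rw [hu] at c; rw [hv] at c'; simp at c c'; exact (Nat.not_even_iff_odd.mpr c) c'
    · rw [hu] at c; rw [hv] at c'; simp at c c'; exact (Nat.not_even_iff_odd.mpr c') c
    · exact d (hu.trans hv.symm)
  · refine ⟨i', fun j hj => (p j (hj.trans h)).trans (p' j hj), ?_, ?_⟩
    · rw [p i' h]; exact d'
    · have hcc : countB u i' = countB v i' := countB_congr (fun j hj => p j (hj.trans h))
      rw [hcc, p i' h]; exact c'

lemma TL_head_tf {u v : ℕ → Bool} (hu : u 0 = true) (hv : v 0 = false) : TL u v :=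
  ⟨0, fun j hj => absurd hj (Nat.not_lt_zero j), by rw [hu, hv]; simp,
    by rw [hu, countB_zero]; simp⟩

lemma TL_head_ft {u v : ℕ → Bool} (hu : u 0 = false) (hv : v 0 = true) : ¬ TL u v := by
  rintro ⟨i, p, d, c⟩
  cases i with
  | zero => rw [hu, countB_zero] at c; simp at c
  | succ n => have := p 0 (Nat.succ_pos n); rw [hu, hv] at this; exact Bool.noConfusion this

lemma countB_shift_true {u : ℕ → Bool} (hu : u 0 = true) (i : ℕ) :
    countB u (i + 1) = countB (shiftSeq u) i := by
  rw [countB_shift, hu]; simp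

lemma countB_shift_false {u : ℕ → Bool} (hu : u 0 = false) (i : ℕ) :
    countB u (i + 1) = countB (shiftSeq u) i + 1 := by
  rw [countB_shift, hu]; simp [Nat.add_comm]

lemma TL_cons_tt {u v : ℕ → Bool} (hu : u 0 = true) (hv : v 0 = true) :
    TL u v ↔ TL (shiftSeq u) (shiftSeq v) := by
  constructor
  · rintro ⟨i, p, d, c⟩
    cases i with
    | zero => rw [hu, hv] at d; exact absurd rfl d
    | succ n =>
        refine ⟨n, fun j hj => p (j + 1) (Nat.succ_lt_succ hj), d, ?_⟩
        rwa [countB_shift_true hu] at c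
  · rintro ⟨n, p, d, c⟩
    refine ⟨n + 1, ?_, d, ?_⟩
    · intro j hj
      cases j with
      | zero => rw [hu, hv]
      | succ m => exact p m (Nat.lt_of_succ_lt_succ hj)
    · rwa [countB_shift_true hu]

lemma TL_cons_ff {u v : ℕ → Bool} (hu : u 0 = false) (hv : v 0 = false) :
    TL u v ↔ TL (shiftSeq v) (shiftSeq u) := by
  constructor
  · rintro ⟨i, p, d, c⟩
    cases i with
    | zero => rw [hu, hv] at d; exact absurd rfl d
    | succ n =>
        have hsc : countB (shiftSeq v) n = countB (shiftSeq u) n :=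
          countB_congr (fun j hj => (p (j + 1) (Nat.succ_lt_succ hj)).symm)
        refine ⟨n, fun j hj => (p (j + 1) (Nat.succ_lt_succ hj)).symm,
          fun h => d h.symm, ?_⟩
        rw [countB_shift_false hu, Nat.even_add_one] at c
        rw [hsc]
        show v (n + 1) = true ↔ Even (countB (shiftSeq u) n)
        have d' : u (n + 1) ≠ v (n + 1) := d
        cases h1 : u (n + 1) <;> cases h2 : v (n + 1) <;> simp_all <;> tauto
  · rintro ⟨n, p, d, c⟩
    have hsc : countB (shiftSeq v) n = countB (shiftSeq u) n :=
      countB_congr (fun j hj => p j hj)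
    refine ⟨n + 1, ?_, fun h => d h.symm, ?_⟩
    · intro j hj
      cases j with
      | zero => rw [hu, hv]
      | succ m => exact (p m (Nat.lt_of_succ_lt_succ hj)).symm
    · rw [countB_shift_false hu, Nat.even_add_one]
      show u (n + 1) = true ↔ ¬ Even (countB (shiftSeq u) n)
      rw [hsc] at c
      have d' : shiftSeq v n ≠ shiftSeq u n := d
      have c' : v (n + 1) = true ↔ Even (countB (shiftSeq u) n) := c
      have d2 : v (n + 1) ≠ u (n + 1) := d'
      cases h1 : u (n + 1) <;> cases h2 : v (n + 1) <;> simp_all <;> tauto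

/-! ### Itineraries of unimodal permutations -/

def itin {N : ℕ} (δ : Equiv.Perm (Fin N)) (s : Fin N → Bool) (x : Fin N) : ℕ → Bool :=
  fun i => s ((δ ^ i) x)

lemma itin_zero {N : ℕ} (δ : Equiv.Perm (Fin N)) (s : Fin N → Bool) (x : Fin N) :
    itin δ s x 0 = s x := by simp [itin]

lemma itin_shift {N : ℕ} (δ : Equiv.Perm (Fin N)) (s : Fin N → Bool) (x : Fin N) :
    shiftSeq (itin δ s x) = itin δ s (δ x) := by
  funext i
  show s ((δ ^ (i + 1)) x) = s ((δ ^ i) (δ x))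
  rw [pow_succ, Equiv.Perm.mul_apply]

/-- Hypotheses relating a permutation to a "side" function, satisfied by a
unimodal permutation with the side `x ≤ m` (or `x < m`). -/
structure GoodSide {N : ℕ} (δ : Equiv.Perm (Fin N)) (s : Fin N → Bool) : Prop where
  dc : ∀ x y : Fin N, x ≤ y → s y = true → s x = true
  incr : ∀ x y, x < y → s x = true → s y = true → δ x < δ y
  decr : ∀ x y, x < y → s x = false → s y = false → δ y < δ x

lemma goodside_le {N : ℕ} {δ : Equiv.Perm (Fin N)} {m : Fin N} (h : IsUnimodalPeak δ m) :
    GoodSide δ (fun x => decide (x ≤ m)) where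
  dc x y hxy hy := by
    simp only [decide_eq_true_eq] at *
    exact hxy.trans hy
  incr x y hxy _ hy := h.1 x y hxy (by simpa using hy)
  decr x y hxy hx _ := h.2 x y (by simpa using le_of_not_ge (by simpa using hx)) hxy

lemma goodside_lt {N : ℕ} {δ : Equiv.Perm (Fin N)} {m : Fin N} (h : IsUnimodalPeak δ m) :
    GoodSide δ (fun x => decide (x < m)) where
  dc x y hxy hy := by
    simp only [decide_eq_true_eq] at *
    exact lt_of_le_of_lt hxy hy
  incr x y hxy _ hy := h.1 x y hxy (le_of_lt (by simpa using hy))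
  decr x y hxy hx _ := h.2 x y (by simpa using le_of_not_gt (by simpa using hx)) hxy

/-- The fundamental comparison lemma: the spatial order of two points with
distinct itineraries is computed by the twisted lexicographic order. -/
lemma goodside_tl {N : ℕ} {δ : Equiv.Perm (Fin N)} {s : Fin N → Bool}
    (h : GoodSide δ s) :
    ∀ d : ℕ, ∀ x y : Fin N, x < y → (∀ j, j < d → itin δ s x j = itin δ s y j) →
      itin δ s x d ≠ itin δ s y d → TL (itin δ s x) (itin δ s y) := by
  intro d
  induction d with
  | zero =>
      intro x y hxy _ hd
      rw [itin_zero, itin_zero] at hd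
      cases hsx : s x <;> cases hsy : s y
      · exact absurd (hsx.trans hsy.symm) hd
      · exact absurd (h.dc x y hxy.le hsy) (by simp [hsx])
      · exact TL_head_tf (by rwa [itin_zero]) (by rwa [itin_zero])
      · exact absurd (hsx.trans hsy.symm) hd
  | succ n ih =>
      intro x y hxy hp hd
      have h0 : s x = s y := by
        have := hp 0 (Nat.succ_pos n)
        rwa [itin_zero, itin_zero] at this
      cases hsx : s x
      · have hsy : s y = false := by rw [← h0, hsx]
        have hlt : δ y < δ x := h.decr x y hxy hsx hsy
        have htl : TL (itin δ s (δ y)) (itin δ s (δ x)) := by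
          apply ih (δ y) (δ x) hlt
          · intro j hj
            have := hp (j + 1) (Nat.succ_lt_succ hj)
            rw [show itin δ s x (j+1) = shiftSeq (itin δ s x) j from rfl,
              show itin δ s y (j+1) = shiftSeq (itin δ s y) j from rfl,
              itin_shift, itin_shift] at this
            exact this.symm
          · intro hc
            apply hd
            rw [show itin δ s x (n+1) = shiftSeq (itin δ s x) n from rfl,
              show itin δ s y (n+1) = shiftSeq (itin δ s y) n from rfl,
              itin_shift, itin_shift]
            exact hc.symm
        rw [TL_cons_ff (by rwa [itin_zero]) (by rwa [itin_zero]),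
          itin_shift, itin_shift]
        exact htl
      · have hsy : s y = true := by rw [← h0, hsx]
        have hlt : δ x < δ y := h.incr x y hxy hsx hsy
        have htl : TL (itin δ s (δ x)) (itin δ s (δ y)) := by
          apply ih (δ x) (δ y) hlt
          · intro j hj
            have := hp (j + 1) (Nat.succ_lt_succ hj)
            rwa [show itin δ s x (j+1) = shiftSeq (itin δ s x) j from rfl,
              show itin δ s y (j+1) = shiftSeq (itin δ s y) j from rfl,
              itin_shift, itin_shift] at this
          · intro hc
            apply hd
            rw [show itin δ s x (n+1) = shiftSeq (itin δ s x) n from rfl,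
              show itin δ s y (n+1) = shiftSeq (itin δ s y) n from rfl,
              itin_shift, itin_shift]
            exact hc
        rw [TL_cons_tt (by rwa [itin_zero]) (by rwa [itin_zero]),
          itin_shift, itin_shift]
        exact htl

lemma goodside_tle {N : ℕ} {δ : Equiv.Perm (Fin N)} {s : Fin N → Bool}
    (h : GoodSide δ s) {x y : Fin N} (hxy : x ≤ y) :
    itin δ s x = itin δ s y ∨ TL (itin δ s x) (itin δ s y) := by
  rcases eq_or_lt_of_le hxy with rfl | hlt
  · exact Or.inl rfl
  by_cases heq : itin δ s x = itin δ s y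
  · exact Or.inl heq
  · right
    classical
    have hne : ∃ i, itin δ s x i ≠ itin δ s y i := Function.ne_iff.1 heq
    exact goodside_tl h (Nat.find hne) x y hlt
      (fun j hj => by by_contra hc; exact Nat.find_min hne hj hc) (Nat.find_spec hne)

/-! ### Facts about transitive unimodal permutations -/

lemma le_peak_image {N : ℕ} {δ : Equiv.Perm (Fin N)} {m : Fin N}
    (h : IsUnimodalPeak δ m) (x : Fin N) : x ≤ δ m := by
  rcases lt_trichotomy (δ.symm x) m with hc | hc | hc
  · have := h.1 _ m hc le_rfl
    rw [Equiv.apply_symm_apply] at this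
    exact this.le
  · rw [← hc, Equiv.apply_symm_apply]
  · have := h.2 m _ le_rfl hc
    rw [Equiv.apply_symm_apply] at this
    exact this.le

lemma transitive_pow_card {N : ℕ} (δ : Equiv.Perm (Fin N)) (ht : IsTransitive δ) :
    δ ^ N = 1 := by
  rcases Nat.lt_or_ge N 2 with hN | hN
  · interval_cases N
    · exact Subsingleton.elim _ _
    · have : δ = 1 := Equiv.ext fun x => Subsingleton.elim _ _
      rw [this, one_pow]
  · have hfix : ∀ x : Fin N, δ x ≠ x := by
      intro x hx
      have hpow : ∀ i : ℕ, (δ ^ i) x = x := by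
        intro i
        induction i with
        | zero => rfl
        | succ n ihn => rw [pow_succ, Equiv.Perm.mul_apply, hx, ihn]
      obtain ⟨y, hy⟩ := Fintype.exists_ne_of_one_lt_card (by rw [Fintype.card_fin]; exact hN) x
      obtain ⟨i, hi⟩ := ht x y
      rw [hpow i] at hi
      exact hy hi.symm
    have hcyc : δ.IsCycle := by
      refine ⟨⟨0, by omega⟩, hfix _, fun y _ => ?_⟩
      obtain ⟨i, hi⟩ := ht ⟨0, by omega⟩ y
      exact ⟨(i : ℤ), by simpa [zpow_natCast] using hi⟩
    have hsupp : δ.support = Finset.univ := by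
      rw [Finset.eq_univ_iff_forall]
      intro x
      rw [Equiv.Perm.mem_support]
      exact hfix x
    have horder : orderOf δ = N := by
      rw [hcyc.orderOf, hsupp]
      simp
    calc δ ^ N = δ ^ orderOf δ := by rw [horder]
    _ = 1 := pow_orderOf_eq_one δ

lemma itin_periodic {N : ℕ} {δ : Equiv.Perm (Fin N)} (hp : δ ^ N = 1)
    (s : Fin N → Bool) (x : Fin N) (i : ℕ) (c : ℕ) :
    itin δ s x (i + c * N) = itin δ s x i := by
  show s _ = s _
  congr 1
  induction c with
  | zero => simp
  | succ t iht =>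
      have : i + (t + 1) * N = (i + t * N) + N := by ring
      rw [this, pow_add, Equiv.Perm.mul_apply, hp]
      simpa using iht


lemma seq_succ {N : ℕ} (δ : Equiv.Perm (Fin N)) (s : Fin N → Bool) (x : Fin N) (j : ℕ) :
    itin δ s x (j + 1) = itin δ s (δ x) j :=
  congrFun (itin_shift δ s x) j

section Main

attribute [local instance] Classical.propDecidable

variable {k l : ℕ} {δ1 : Equiv.Perm (Fin k)} {δ2 : Equiv.Perm (Fin l)} {m1 : Fin k} {m2 : Fin l}

/-- Itinerary of a point of the first permutation, sides `≤ m1`. -/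
def Aseq (δ1 : Equiv.Perm (Fin k)) (m1 : Fin k) (a : Fin k) : ℕ → Bool :=
  itin δ1 (fun x => decide (x ≤ m1)) a

/-- Itinerary of a point of the second permutation, sides `< m2`. -/
def Bseq (δ2 : Equiv.Perm (Fin l)) (m2 : Fin l) (b : Fin l) : ℕ → Bool :=
  itin δ2 (fun y => decide (y < m2)) b

/-- The canonical interleaving relation: `inl a` comes before `inr b`. -/
def Rrel (δ1 : Equiv.Perm (Fin k)) (δ2 : Equiv.Perm (Fin l)) (m1 : Fin k) (m2 : Fin l)
    (a : Fin k) (b : Fin l) : Prop :=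
  TL (Aseq δ1 m1 a) (Bseq δ2 m2 b)

lemma Aseq_zero (a : Fin k) : Aseq δ1 m1 a 0 = decide (a ≤ m1) := itin_zero _ _ _

lemma Bseq_zero (b : Fin l) : Bseq δ2 m2 b 0 = decide (b < m2) := itin_zero _ _ _

lemma Aseq_succ (a : Fin k) (j : ℕ) : Aseq δ1 m1 a (j + 1) = Aseq δ1 m1 (δ1 a) j :=
  seq_succ _ _ _ _

lemma Bseq_succ (b : Fin l) (j : ℕ) : Bseq δ2 m2 b (j + 1) = Bseq δ2 m2 (δ2 b) j :=
  seq_succ _ _ _ _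

/-- The no-tie theorem: an itinerary from the first permutation never equals an
itinerary from the second one (with the strict side convention). -/
lemma no_tie (h1 : IsUnimodalPeak δ1 m1) (h2 : IsUnimodalPeak δ2 m2)
    (ht1 : IsTransitive δ1) (ht2 : IsTransitive δ2) :
    ∀ (a : Fin k) (b : Fin l), Aseq δ1 m1 a ≠ Bseq δ2 m2 b := by
  intro a b heq
  have hk : 0 < k := m1.pos
  have hl : 0 < l := m2.pos
  have hp1 : δ1 ^ k = 1 := transitive_pow_card δ1 ht1
  have hp2 : δ2 ^ l = 1 := transitive_pow_card δ2 ht2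
  have hshift : ∀ (a : Fin k) (b : Fin l), Aseq δ1 m1 a = Bseq δ2 m2 b →
      Aseq δ1 m1 (δ1 a) = Bseq δ2 m2 (δ2 b) := by
    intro a b h
    unfold Aseq Bseq
    rw [← itin_shift, ← itin_shift]
    exact congrArg shiftSeq h
  have hiter : ∀ (t : ℕ) (a : Fin k) (b : Fin l), Aseq δ1 m1 a = Bseq δ2 m2 b →
      Aseq δ1 m1 ((δ1 ^ t) a) = Bseq δ2 m2 ((δ2 ^ t) b) := by
    intro t
    induction t with
    | zero => intro a b h; simpa using h
    | succ n ihn =>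
        intro a b h
        rw [pow_succ, pow_succ, Equiv.Perm.mul_apply, Equiv.Perm.mul_apply]
        exact ihn (δ1 a) (δ2 b) (hshift a b h)
  -- move to the pair (m1, b2)
  obtain ⟨t1, ht1'⟩ := ht1 a m1
  have heq1 : Aseq δ1 m1 m1 = Bseq δ2 m2 ((δ2 ^ t1) b) := by
    have h' := hiter t1 a b heq
    rwa [ht1'] at h'
  set b2 := (δ2 ^ t1) b with hb2def
  have hb2 : b2 < m2 := by
    have h0 : Aseq δ1 m1 m1 0 = true := by
      rw [Aseq_zero]; exact decide_eq_true le_rfl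
    rw [heq1, Bseq_zero] at h0
    exact of_decide_eq_true h0
  have heq2 : Aseq δ1 m1 (δ1 m1) = Bseq δ2 m2 (δ2 b2) := hshift _ _ heq1
  -- move to the pair (a3, m2)
  obtain ⟨t2, ht2'⟩ := ht2 (δ2 b2) m2
  have heq3 : Aseq δ1 m1 ((δ1 ^ t2) (δ1 m1)) = Bseq δ2 m2 m2 := by
    have h' := hiter t2 _ _ heq2
    rwa [ht2'] at h'
  set a3 := (δ1 ^ t2) (δ1 m1) with ha3def
  have heq4 : Aseq δ1 m1 (δ1 a3) = Bseq δ2 m2 (δ2 m2) := hshift _ _ heq3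
  -- maximality forces the canonical tie
  have tle1 := goodside_tle (goodside_le h1) (le_peak_image h1 (δ1 a3))
  have tle2 := goodside_tle (goodside_lt h2) (le_peak_image h2 (δ2 b2))
  have tle1' : Bseq δ2 m2 (δ2 m2) = Aseq δ1 m1 (δ1 m1) ∨
      TL (Bseq δ2 m2 (δ2 m2)) (Aseq δ1 m1 (δ1 m1)) := by
    have : Aseq δ1 m1 (δ1 a3) = Bseq δ2 m2 (δ2 m2) := heq4
    rw [show (itin δ1 (fun x => decide (x ≤ m1)) (δ1 a3)) = Aseq δ1 m1 (δ1 a3) from rfl,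
      show (itin δ1 (fun x => decide (x ≤ m1)) (δ1 m1)) = Aseq δ1 m1 (δ1 m1) from rfl,
      this] at tle1
    exact tle1
  have tle2' : Aseq δ1 m1 (δ1 m1) = Bseq δ2 m2 (δ2 m2) ∨
      TL (Aseq δ1 m1 (δ1 m1)) (Bseq δ2 m2 (δ2 m2)) := by
    have : Bseq δ2 m2 (δ2 b2) = Aseq δ1 m1 (δ1 m1) := heq2.symm
    rw [show (itin δ2 (fun y => decide (y < m2)) (δ2 b2)) = Bseq δ2 m2 (δ2 b2) from rfl,
      show (itin δ2 (fun y => decide (y < m2)) (δ2 m2)) = Bseq δ2 m2 (δ2 m2) from rfl,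
      this] at tle2
    exact tle2
  have hS : Aseq δ1 m1 (δ1 m1) = Bseq δ2 m2 (δ2 m2) := by
    rcases tle2' with h | h
    · exact h
    · rcases tle1' with h' | h'
      · exact h'.symm
      · exact absurd h' (TL_asymm h)
  -- evaluate at a common index to get a contradiction
  have hvalA : Aseq δ1 m1 (δ1 m1) ((k - 1) + (l - 1) * k) = true := by
    rw [show Aseq δ1 m1 (δ1 m1) = itin δ1 (fun x => decide (x ≤ m1)) (δ1 m1) from rfl,
      itin_periodic hp1]
    show decide (((δ1 ^ (k - 1)) (δ1 m1)) ≤ m1) = true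
    have : (δ1 ^ (k - 1)) (δ1 m1) = (δ1 ^ k) m1 := by
      rw [← Equiv.Perm.mul_apply, ← pow_succ]
      congr 2
      omega
    rw [this, hp1]
    exact decide_eq_true le_rfl
  have hvalB : Bseq δ2 m2 (δ2 m2) ((l - 1) + (k - 1) * l) = false := by
    rw [show Bseq δ2 m2 (δ2 m2) = itin δ2 (fun y => decide (y < m2)) (δ2 m2) from rfl,
      itin_periodic hp2]
    show decide (((δ2 ^ (l - 1)) (δ2 m2)) < m2) = false
    have : (δ2 ^ (l - 1)) (δ2 m2) = (δ2 ^ l) m2 := by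
      rw [← Equiv.Perm.mul_apply, ← pow_succ]
      congr 2
      omega
    rw [this, hp2]
    exact decide_eq_false (lt_irrefl m2)
  have hidx : (k - 1) + (l - 1) * k = (l - 1) + (k - 1) * l := by
    obtain ⟨k', rfl⟩ := Nat.exists_eq_succ_of_ne_zero (Nat.pos_iff_ne_zero.1 hk)
    obtain ⟨l', rfl⟩ := Nat.exists_eq_succ_of_ne_zero (Nat.pos_iff_ne_zero.1 hl)
    simp only [Nat.succ_sub_one, Nat.succ_eq_add_one]
    ring
  rw [hS, hidx, hvalB] at hvalA
  exact Bool.noConfusion hvalA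

/-! ### Recursion and monotonicity properties of `Rrel` -/

lemma Rhead_true {a : Fin k} {b : Fin l} (ha : a ≤ m1) (hb : m2 ≤ b) :
    Rrel δ1 δ2 m1 m2 a b :=
  TL_head_tf (by rw [Aseq_zero]; exact decide_eq_true ha)
    (by rw [Bseq_zero]; exact decide_eq_false (not_lt.2 hb))

lemma Rhead_false {a : Fin k} {b : Fin l} (ha : m1 < a) (hb : b < m2) :
    ¬ Rrel δ1 δ2 m1 m2 a b :=
  TL_head_ft (by rw [Aseq_zero]; exact decide_eq_false (not_le.2 ha))
    (by rw [Bseq_zero]; exact decide_eq_true hb)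

lemma Rrec_AA {a : Fin k} {b : Fin l} (ha : a ≤ m1) (hb : b < m2) :
    Rrel δ1 δ2 m1 m2 a b ↔ Rrel δ1 δ2 m1 m2 (δ1 a) (δ2 b) := by
  unfold Rrel
  rw [TL_cons_tt (by rw [Aseq_zero]; exact decide_eq_true ha)
    (by rw [Bseq_zero]; exact decide_eq_true hb)]
  unfold Aseq Bseq
  rw [itin_shift, itin_shift]

lemma Rrec_BB (h1 : IsUnimodalPeak δ1 m1) (h2 : IsUnimodalPeak δ2 m2)
    (ht1 : IsTransitive δ1) (ht2 : IsTransitive δ2)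
    {a : Fin k} {b : Fin l} (ha : m1 < a) (hb : m2 ≤ b) :
    Rrel δ1 δ2 m1 m2 a b ↔ ¬ Rrel δ1 δ2 m1 m2 (δ1 a) (δ2 b) := by
  unfold Rrel
  rw [TL_cons_ff (by rw [Aseq_zero]; exact decide_eq_false (not_le.2 ha))
    (by rw [Bseq_zero]; exact decide_eq_false (not_lt.2 hb))]
  unfold Aseq Bseq
  rw [itin_shift, itin_shift]
  constructor
  · exact fun h h' => TL_asymm h' h
  · intro h
    rcases TL_total (fun hc => no_tie h1 h2 ht1 ht2 (δ1 a) (δ2 b) hc) with h' | h'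
    · exact absurd h' h
    · exact h'

lemma Rcut_left (h1 : IsUnimodalPeak δ1 m1) {a a' : Fin k} {b : Fin l} (haa : a' ≤ a)
    (h : Rrel δ1 δ2 m1 m2 a b) : Rrel δ1 δ2 m1 m2 a' b := by
  rcases goodside_tle (goodside_le h1) haa with he | htl
  · unfold Rrel Aseq
    rw [show itin δ1 (fun x => decide (x ≤ m1)) a' = itin δ1 (fun x => decide (x ≤ m1)) a
      from he]
    exact h
  · exact TL_trans htl h

lemma Rcut_right (h2 : IsUnimodalPeak δ2 m2) {a : Fin k} {b b' : Fin l} (hbb : b ≤ b')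
    (h : Rrel δ1 δ2 m1 m2 a b) : Rrel δ1 δ2 m1 m2 a b' := by
  rcases goodside_tle (goodside_lt h2) hbb with he | htl
  · unfold Rrel Bseq
    rw [← he]
    exact h
  · exact TL_trans h htl

lemma Rpeak : Rrel δ1 δ2 m1 m2 m1 m2 := Rhead_true le_rfl le_rfl

end Main

section Pos

attribute [local instance] Classical.propDecidable

variable {k l : ℕ} {δ1 : Equiv.Perm (Fin k)} {δ2 : Equiv.Perm (Fin l)} {m1 : Fin k} {m2 : Fin l}

lemma card_filter_lt {N : ℕ} (x : Fin N) :
    (Finset.univ.filter fun y => y < x).card = x.val := by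
  rw [show (Finset.univ.filter fun y => y < x) = Finset.Iio x by ext y; simp]
  simpa using Fin.card_Iio (b := x)

lemma card_filter_le {N : ℕ} (x : Fin N) :
    (Finset.univ.filter fun y => y ≤ x).card = x.val + 1 := by
  rw [show (Finset.univ.filter fun y => y ≤ x) = Finset.Iic x by ext y; simp]
  simpa using Fin.card_Iic (b := x)

/-- Position of `a` (from the first permutation) in the interleaving. -/
noncomputable def P1 (δ1 : Equiv.Perm (Fin k)) (δ2 : Equiv.Perm (Fin l)) (m1 : Fin k)
    (m2 : Fin l) (a : Fin k) : Fin (k + l) :=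
  ⟨a.val + (Finset.univ.filter fun b => ¬ Rrel δ1 δ2 m1 m2 a b).card, by
    have ha : a.val < k := a.isLt
    have hc : (Finset.univ.filter fun b => ¬ Rrel δ1 δ2 m1 m2 a b).card ≤ l := by
      refine le_trans (Finset.card_filter_le _ _) ?_
      simp
    omega⟩

/-- Position of `b` (from the second permutation) in the interleaving. -/
noncomputable def P2 (δ1 : Equiv.Perm (Fin k)) (δ2 : Equiv.Perm (Fin l)) (m1 : Fin k)
    (m2 : Fin l) (b : Fin l) : Fin (k + l) :=
  ⟨b.val + (Finset.univ.filter fun a => Rrel δ1 δ2 m1 m2 a b).card, by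
    have hb : b.val < l := b.isLt
    have hc : (Finset.univ.filter fun a => Rrel δ1 δ2 m1 m2 a b).card ≤ k := by
      refine le_trans (Finset.card_filter_le _ _) ?_
      simp
    omega⟩

local notation "RR" => Rrel δ1 δ2 m1 m2
local notation "PP1" => P1 δ1 δ2 m1 m2
local notation "PP2" => P2 δ1 δ2 m1 m2

lemma P1_val (a : Fin k) :
    (PP1 a).val = a.val + (Finset.univ.filter fun b => ¬ RR a b).card := rfl

lemma P2_val (b : Fin l) :
    (PP2 b).val = b.val + (Finset.univ.filter fun a => RR a b).card := rfl

lemma P1_lt_P2 (h1 : IsUnimodalPeak δ1 m1) (h2 : IsUnimodalPeak δ2 m2) {a : Fin k} {b : Fin l} (hR : RR a b) : PP1 a < PP2 b := by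
  have hs1 : (Finset.univ.filter fun a' : Fin k => a' ≤ a) ⊆
      Finset.univ.filter fun a' => RR a' b := by
    intro a' ha'
    simp only [Finset.mem_filter, Finset.mem_univ, true_and] at *
    exact Rcut_left h1 ha' hR
  have hc1 : a.val + 1 ≤ (Finset.univ.filter fun a' => RR a' b).card := by
    have := Finset.card_le_card hs1
    rwa [card_filter_le] at this
  have hs2 : (Finset.univ.filter fun b' : Fin l => ¬ RR a b') ⊆
      Finset.univ.filter fun b' => b' < b := by
    intro b' hb'
    simp only [Finset.mem_filter, Finset.mem_univ, true_and] at *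
    by_contra hc
    exact hb' (Rcut_right h2 (not_lt.1 hc) hR)
  have hc2 : (Finset.univ.filter fun b' => ¬ RR a b').card ≤ b.val := by
    have := Finset.card_le_card hs2
    rwa [card_filter_lt] at this
  rw [Fin.lt_def, P1_val, P2_val]
  omega

lemma P2_lt_P1 (h1 : IsUnimodalPeak δ1 m1) (h2 : IsUnimodalPeak δ2 m2) {a : Fin k} {b : Fin l} (hR : ¬ RR a b) : PP2 b < PP1 a := by
  have hs1 : (Finset.univ.filter fun a' : Fin k => RR a' b) ⊆
      Finset.univ.filter fun a' => a' < a := by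
    intro a' ha'
    simp only [Finset.mem_filter, Finset.mem_univ, true_and] at *
    by_contra hc
    exact hR (Rcut_left h1 (not_lt.1 hc) ha')
  have hc1 : (Finset.univ.filter fun a' => RR a' b).card ≤ a.val := by
    have := Finset.card_le_card hs1
    rwa [card_filter_lt] at this
  have hs2 : (Finset.univ.filter fun b' : Fin l => b' ≤ b) ⊆
      Finset.univ.filter fun b' => ¬ RR a b' := by
    intro b' hb'
    simp only [Finset.mem_filter, Finset.mem_univ, true_and] at *
    exact fun hr => hR (Rcut_right h2 hb' hr)
  have hc2 : b.val + 1 ≤ (Finset.univ.filter fun b' => ¬ RR a b').card := by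
    have := Finset.card_le_card hs2
    rwa [card_filter_le] at this
  rw [Fin.lt_def, P1_val, P2_val]
  omega

lemma P1_ne_P2 (h1 : IsUnimodalPeak δ1 m1) (h2 : IsUnimodalPeak δ2 m2) (a : Fin k) (b : Fin l) : PP1 a ≠ PP2 b := by
  by_cases hR : RR a b
  · exact ne_of_lt (P1_lt_P2 h1 h2 hR)
  · exact (ne_of_lt (P2_lt_P1 h1 h2 hR)).symm

lemma P1_lt_P2_iff (h1 : IsUnimodalPeak δ1 m1) (h2 : IsUnimodalPeak δ2 m2) {a : Fin k} {b : Fin l} : PP1 a < PP2 b ↔ RR a b := by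
  constructor
  · intro h
    by_contra hR
    exact lt_asymm h (P2_lt_P1 h1 h2 hR)
  · exact P1_lt_P2 h1 h2

lemma P2_lt_P1_iff (h1 : IsUnimodalPeak δ1 m1) (h2 : IsUnimodalPeak δ2 m2) {a : Fin k} {b : Fin l} : PP2 b < PP1 a ↔ ¬ RR a b := by
  constructor
  · intro h hR
    exact lt_asymm h (P1_lt_P2 h1 h2 hR)
  · exact P2_lt_P1 h1 h2

lemma P1_mono (h1 : IsUnimodalPeak δ1 m1) : StrictMono PP1 := by
  intro a a' haa
  have hsub : (Finset.univ.filter fun b => ¬ RR a b) ⊆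
      Finset.univ.filter fun b => ¬ RR a' b := by
    intro b hb
    simp only [Finset.mem_filter, Finset.mem_univ, true_and] at *
    exact fun hr => hb (Rcut_left h1 haa.le hr)
  have := Finset.card_le_card hsub
  rw [Fin.lt_def, P1_val, P1_val]
  have : a.val < a'.val := haa
  omega

lemma P2_mono (h2 : IsUnimodalPeak δ2 m2) : StrictMono PP2 := by
  intro b b' hbb
  have hsub : (Finset.univ.filter fun a => RR a b) ⊆
      Finset.univ.filter fun a => RR a b' := by
    intro a ha
    simp only [Finset.mem_filter, Finset.mem_univ, true_and] at *
    exact Rcut_right h2 hbb.le ha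
  have := Finset.card_le_card hsub
  rw [Fin.lt_def, P2_val, P2_val]
  have : b.val < b'.val := hbb
  omega

/-- The interleaving bijection. -/
noncomputable def mergedEquiv (h1 : IsUnimodalPeak δ1 m1) (h2 : IsUnimodalPeak δ2 m2) :
    (Fin k ⊕ Fin l) ≃ Fin (k + l) :=
  Equiv.ofBijective (Sum.elim PP1 PP2) (by
    rw [Fintype.bijective_iff_injective_and_card]
    constructor
    · rintro (a | b) (a' | b') h <;> simp only [Sum.elim_inl, Sum.elim_inr] at h
      · exact congrArg Sum.inl ((P1_mono h1).injective h)
      · exact absurd h (P1_ne_P2 h1 h2 _ _)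
      · exact absurd h.symm (P1_ne_P2 h1 h2 _ _)
      · exact congrArg Sum.inr ((P2_mono h2).injective h)
    · simp)

/-- The merged permutation `δ1 ⊕_J δ2`. -/
noncomputable def mergedPerm (h1 : IsUnimodalPeak δ1 m1) (h2 : IsUnimodalPeak δ2 m2) :
    Equiv.Perm (Fin (k + l)) :=
  ((mergedEquiv h1 h2).symm.trans (Equiv.sumCongr δ1 δ2)).trans (mergedEquiv h1 h2)

lemma mergedPerm_P1 (h1 : IsUnimodalPeak δ1 m1) (h2 : IsUnimodalPeak δ2 m2) (a : Fin k) : mergedPerm h1 h2 (PP1 a) = PP1 (δ1 a) := by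
  show (mergedEquiv h1 h2) ((Equiv.sumCongr δ1 δ2) ((mergedEquiv h1 h2).symm (PP1 a))) = _
  rw [show PP1 a = mergedEquiv h1 h2 (Sum.inl a) from rfl, Equiv.symm_apply_apply]
  rfl

lemma mergedPerm_P2 (h1 : IsUnimodalPeak δ1 m1) (h2 : IsUnimodalPeak δ2 m2) (b : Fin l) : mergedPerm h1 h2 (PP2 b) = PP2 (δ2 b) := by
  show (mergedEquiv h1 h2) ((Equiv.sumCongr δ1 δ2) ((mergedEquiv h1 h2).symm (PP2 b))) = _
  rw [show PP2 b = mergedEquiv h1 h2 (Sum.inr b) from rfl, Equiv.symm_apply_apply]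
  rfl

lemma cover (h1 : IsUnimodalPeak δ1 m1) (h2 : IsUnimodalPeak δ2 m2) (p : Fin (k + l)) : (∃ a, PP1 a = p) ∨ (∃ b, PP2 b = p) := by
  obtain ⟨x, hx⟩ := (mergedEquiv h1 h2).surjective p
  cases x with
  | inl a => exact Or.inl ⟨a, hx⟩
  | inr b => exact Or.inr ⟨b, hx⟩

lemma Qforall (h1 : IsUnimodalPeak δ1 m1) (hQ : RR (δ1 m1) (δ2 m2)) : ∀ x, RR x (δ2 m2) :=
  fun x => Rcut_left h1 (le_peak_image h1 x) hQ

lemma notQforall (h1 : IsUnimodalPeak δ1 m1) (h2 : IsUnimodalPeak δ2 m2) (hQ : ¬ RR (δ1 m1) (δ2 m2)) : ∀ y, ¬ RR (δ1 m1) y :=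
  fun y hr => hQ (Rcut_right h2 (le_peak_image h2 y) hr)

lemma R_m2_iff (h1 : IsUnimodalPeak δ1 m1) (h2 : IsUnimodalPeak δ2 m2) (ht1 : IsTransitive δ1) (ht2 : IsTransitive δ2) (hQ : RR (δ1 m1) (δ2 m2)) (a : Fin k) : RR a m2 ↔ a ≤ m1 := by
  constructor
  · intro hR
    by_contra hna
    exact (Rrec_BB h1 h2 ht1 ht2 (not_le.1 hna) le_rfl).1 hR (Qforall h1 hQ (δ1 a))
  · exact fun ha => Rhead_true ha le_rfl

lemma R_m1_iff (h1 : IsUnimodalPeak δ1 m1) (h2 : IsUnimodalPeak δ2 m2) (hQ : ¬ RR (δ1 m1) (δ2 m2)) (b : Fin l) : RR m1 b ↔ m2 ≤ b := by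
  constructor
  · intro hR
    by_contra hnb
    exact notQforall h1 h2 hQ (δ2 b) ((Rrec_AA le_rfl (not_le.1 hnb)).1 hR)
  · exact fun hb => Rhead_true le_rfl hb

lemma unimodal_Q (h1 : IsUnimodalPeak δ1 m1) (h2 : IsUnimodalPeak δ2 m2) (ht1 : IsTransitive δ1) (ht2 : IsTransitive δ2) (hQ : RR (δ1 m1) (δ2 m2)) :
    IsUnimodalPeak (mergedPerm h1 h2) (PP2 m2) := by
  constructor
  · intro p q hpq hqle
    rcases cover h1 h2 p with ⟨a, rfl⟩ | ⟨b, rfl⟩ <;>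
      rcases cover h1 h2 q with ⟨a', rfl⟩ | ⟨b', rfl⟩
    · have haa : a < a' := (P1_mono h1).lt_iff_lt.1 hpq
      have ha' : a' ≤ m1 := (R_m2_iff h1 h2 ht1 ht2 hQ a').1
        ((P1_lt_P2_iff h1 h2).1 (lt_of_le_of_ne hqle (P1_ne_P2 h1 h2 _ _)))
      rw [mergedPerm_P1, mergedPerm_P1]
      exact P1_mono h1 (h1.1 a a' haa ha')
    · have hR : RR a b' := (P1_lt_P2_iff h1 h2).1 hpq
      have hb' : b' ≤ m2 := (P2_mono h2).le_iff_le.1 hqle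
      have ha : a ≤ m1 := (R_m2_iff h1 h2 ht1 ht2 hQ a).1
        ((P1_lt_P2_iff h1 h2).1 (lt_of_lt_of_le hpq hqle))
      rw [mergedPerm_P1, mergedPerm_P2]
      rcases lt_or_eq_of_le hb' with hb2 | hb2
      · exact P1_lt_P2 h1 h2 ((Rrec_AA ha hb2).1 hR)
      · subst hb2
        exact P1_lt_P2 h1 h2 (Qforall h1 hQ (δ1 a))
    · have hnR : ¬ RR a' b := (P2_lt_P1_iff h1 h2).1 hpq
      have ha' : a' ≤ m1 := (R_m2_iff h1 h2 ht1 ht2 hQ a').1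
        ((P1_lt_P2_iff h1 h2).1 (lt_of_le_of_ne hqle (P1_ne_P2 h1 h2 _ _)))
      have hblt : b < m2 := (P2_mono h2).lt_iff_lt.1 (lt_of_lt_of_le hpq hqle)
      rw [mergedPerm_P2, mergedPerm_P1]
      exact P2_lt_P1 h1 h2 (fun hc => hnR ((Rrec_AA ha' hblt).2 hc))
    · have hbb : b < b' := (P2_mono h2).lt_iff_lt.1 hpq
      have hb' : b' ≤ m2 := (P2_mono h2).le_iff_le.1 hqle
      rw [mergedPerm_P2, mergedPerm_P2]
      exact P2_mono h2 (h2.1 b b' hbb hb')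
  · intro p q hple hpq
    rcases cover h1 h2 p with ⟨a, rfl⟩ | ⟨b, rfl⟩ <;>
      rcases cover h1 h2 q with ⟨a', rfl⟩ | ⟨b', rfl⟩
    · have haa : a < a' := (P1_mono h1).lt_iff_lt.1 hpq
      have hma : m1 < a := by
        by_contra hc
        exact ((P2_lt_P1_iff h1 h2).1 (lt_of_le_of_ne hple ((P1_ne_P2 h1 h2 _ _).symm)))
          ((R_m2_iff h1 h2 ht1 ht2 hQ a).2 (not_lt.1 hc))
      rw [mergedPerm_P1, mergedPerm_P1]
      exact P1_mono h1 (h1.2 a a' hma.le haa)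
    · have hR : RR a b' := (P1_lt_P2_iff h1 h2).1 hpq
      have hma : m1 < a := by
        by_contra hc
        exact ((P2_lt_P1_iff h1 h2).1 (lt_of_le_of_ne hple ((P1_ne_P2 h1 h2 _ _).symm)))
          ((R_m2_iff h1 h2 ht1 ht2 hQ a).2 (not_lt.1 hc))
      have hmb : m2 ≤ b' :=
        ((P2_mono h2).lt_iff_lt.1 (lt_of_le_of_lt hple hpq)).le
      rw [mergedPerm_P1, mergedPerm_P2]
      exact P2_lt_P1 h1 h2 ((Rrec_BB h1 h2 ht1 ht2 hma hmb).1 hR)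
    · have hnR : ¬ RR a' b := (P2_lt_P1_iff h1 h2).1 hpq
      have hmb : m2 ≤ b := (P2_mono h2).le_iff_le.1 hple
      rw [mergedPerm_P2, mergedPerm_P1]
      rcases eq_or_lt_of_le hmb with hb2 | hb2
      · rw [← hb2]
        exact P1_lt_P2 h1 h2 (Qforall h1 hQ (δ1 a'))
      · have hma' : m1 < a' := by
          by_contra hc
          exact ((P2_lt_P1_iff h1 h2).1 (lt_of_le_of_lt hple hpq))
            ((R_m2_iff h1 h2 ht1 ht2 hQ a').2 (not_lt.1 hc))
        have hRd : RR (δ1 a') (δ2 b) := by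
          by_contra hc
          exact hnR ((Rrec_BB h1 h2 ht1 ht2 hma' hb2.le).2 hc)
        exact P1_lt_P2 h1 h2 hRd
    · have hbb : b < b' := (P2_mono h2).lt_iff_lt.1 hpq
      have hmb : m2 ≤ b := (P2_mono h2).le_iff_le.1 hple
      rw [mergedPerm_P2, mergedPerm_P2]
      exact P2_mono h2 (h2.2 b b' hmb hbb)

lemma unimodal_notQ (h1 : IsUnimodalPeak δ1 m1) (h2 : IsUnimodalPeak δ2 m2) (ht1 : IsTransitive δ1) (ht2 : IsTransitive δ2) (hQ : ¬ RR (δ1 m1) (δ2 m2)) :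
    IsUnimodalPeak (mergedPerm h1 h2) (PP1 m1) := by
  constructor
  · intro p q hpq hqle
    rcases cover h1 h2 p with ⟨a, rfl⟩ | ⟨b, rfl⟩ <;>
      rcases cover h1 h2 q with ⟨a', rfl⟩ | ⟨b', rfl⟩
    · have haa : a < a' := (P1_mono h1).lt_iff_lt.1 hpq
      have ha' : a' ≤ m1 := (P1_mono h1).le_iff_le.1 hqle
      rw [mergedPerm_P1, mergedPerm_P1]
      exact P1_mono h1 (h1.1 a a' haa ha')
    · have hR : RR a b' := (P1_lt_P2_iff h1 h2).1 hpq
      have hnb : ¬ RR m1 b' := (P2_lt_P1_iff h1 h2).1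
        (lt_of_le_of_ne hqle ((P1_ne_P2 h1 h2 m1 b').symm))
      have hb' : b' < m2 := by
        by_contra hc
        exact hnb ((R_m1_iff h1 h2 hQ b').2 (not_lt.1 hc))
      have ha : a ≤ m1 := ((P1_mono h1).lt_iff_lt.1 (lt_of_lt_of_le hpq hqle)).le
      rw [mergedPerm_P1, mergedPerm_P2]
      exact P1_lt_P2 h1 h2 ((Rrec_AA ha hb').1 hR)
    · have hnR : ¬ RR a' b := (P2_lt_P1_iff h1 h2).1 hpq
      have ha' : a' ≤ m1 := (P1_mono h1).le_iff_le.1 hqle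
      have hnb : ¬ RR m1 b := (P2_lt_P1_iff h1 h2).1 (lt_of_lt_of_le hpq hqle)
      have hb : b < m2 := by
        by_contra hc
        exact hnb ((R_m1_iff h1 h2 hQ b).2 (not_lt.1 hc))
      rw [mergedPerm_P2, mergedPerm_P1]
      exact P2_lt_P1 h1 h2 (fun hc => hnR ((Rrec_AA ha' hb).2 hc))
    · have hbb : b < b' := (P2_mono h2).lt_iff_lt.1 hpq
      have hnb : ¬ RR m1 b' := (P2_lt_P1_iff h1 h2).1
        (lt_of_le_of_ne hqle ((P1_ne_P2 h1 h2 m1 b').symm))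
      have hb' : b' < m2 := by
        by_contra hc
        exact hnb ((R_m1_iff h1 h2 hQ b').2 (not_lt.1 hc))
      rw [mergedPerm_P2, mergedPerm_P2]
      exact P2_mono h2 (h2.1 b b' hbb hb'.le)
  · intro p q hple hpq
    rcases cover h1 h2 p with ⟨a, rfl⟩ | ⟨b, rfl⟩ <;>
      rcases cover h1 h2 q with ⟨a', rfl⟩ | ⟨b', rfl⟩
    · have haa : a < a' := (P1_mono h1).lt_iff_lt.1 hpq
      have hma : m1 ≤ a := (P1_mono h1).le_iff_le.1 hple
      rw [mergedPerm_P1, mergedPerm_P1]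
      exact P1_mono h1 (h1.2 a a' hma haa)
    · have hR : RR a b' := (P1_lt_P2_iff h1 h2).1 hpq
      have hma : m1 ≤ a := (P1_mono h1).le_iff_le.1 hple
      have hmb' : m2 ≤ b' := (R_m1_iff h1 h2 hQ b').1
        ((P1_lt_P2_iff h1 h2).1 (lt_of_le_of_lt hple hpq))
      rw [mergedPerm_P1, mergedPerm_P2]
      rcases eq_or_lt_of_le hma with he | hma2
      · rw [← he]
        exact P2_lt_P1 h1 h2 (notQforall h1 h2 hQ (δ2 b'))
      · exact P2_lt_P1 h1 h2 ((Rrec_BB h1 h2 ht1 ht2 hma2 hmb').1 hR)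
    · have hnR : ¬ RR a' b := (P2_lt_P1_iff h1 h2).1 hpq
      have hmb : m2 ≤ b := (R_m1_iff h1 h2 hQ b).1
        ((P1_lt_P2_iff h1 h2).1 (lt_of_le_of_ne hple (P1_ne_P2 h1 h2 m1 b)))
      have hma' : m1 < a' := (P1_mono h1).lt_iff_lt.1 (lt_of_le_of_lt hple hpq)
      have hRd : RR (δ1 a') (δ2 b) := by
        by_contra hc
        exact hnR ((Rrec_BB h1 h2 ht1 ht2 hma' hmb).2 hc)
      rw [mergedPerm_P2, mergedPerm_P1]
      exact P1_lt_P2 h1 h2 hRd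
    · have hbb : b < b' := (P2_mono h2).lt_iff_lt.1 hpq
      have hmb : m2 ≤ b := (R_m1_iff h1 h2 hQ b).1
        ((P1_lt_P2_iff h1 h2).1 (lt_of_le_of_ne hple (P1_ne_P2 h1 h2 m1 b)))
      rw [mergedPerm_P2, mergedPerm_P2]
      exact P2_mono h2 (h2.2 b b' hmb hbb)

/-! ### Uniqueness: any valid interleaving induces the canonical relation -/

lemma core_unique (h1 : IsUnimodalPeak δ1 m1) (h2 : IsUnimodalPeak δ2 m2)
    (ht1 : IsTransitive δ1) (ht2 : IsTransitive δ2)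
    {δ : Equiv.Perm (Fin (k + l))} {W1 : Fin k → Fin (k + l)} {W2 : Fin l → Fin (k + l)}
    (hW1 : StrictMono W1) (hW2 : StrictMono W2)
    (hne : ∀ a b, W1 a ≠ W2 b)
    (hi1 : ∀ a, δ (W1 a) = W1 (δ1 a)) (hi2 : ∀ b, δ (W2 b) = W2 (δ2 b))
    (hcov : ∀ p, (∃ a, W1 a = p) ∨ (∃ b, W2 b = p))
    (hu : IsUnimodal δ) (hcond : W1 m1 < W2 m2) :
    ∀ (a : Fin k) (b : Fin l), (W1 a < W2 b ↔ RR a b) := by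
  obtain ⟨mh, hpk⟩ := hu
  have topv : ∀ p, p ≤ δ mh := le_peak_image hpk
  have below_iff : ∀ u v, u ≤ mh → v ≤ mh → (u < v ↔ δ u < δ v) := by
    intro u v hu' hv'
    constructor
    · exact fun h => hpk.1 u v h hv'
    · intro h
      by_contra hc
      rcases lt_or_eq_of_le (not_lt.1 hc) with hlt | he
      · exact lt_asymm h (hpk.1 v u hlt hu')
      · rw [he] at h; exact lt_irrefl _ h
  have above_iff : ∀ u v, mh ≤ u → mh ≤ v → (u < v ↔ δ v < δ u) := by
    intro u v hu' hv'
    constructor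
    · exact fun h => hpk.2 u v hu' h
    · intro h
      by_contra hc
      rcases lt_or_eq_of_le (not_lt.1 hc) with hlt | he
      · exact lt_asymm h (hpk.2 v u hv' hlt)
      · rw [he] at h; exact lt_irrefl _ h
  have hdich : mh = W1 m1 ∨ mh = W2 m2 := by
    rcases hcov mh with ⟨a0, ha0⟩ | ⟨b0, hb0⟩
    · left
      have htop : W1 (δ1 m1) ≤ δ mh := topv _
      rw [← ha0, hi1 a0] at htop
      have ha1 : δ1 m1 ≤ δ1 a0 := hW1.le_iff_le.1 htop
      have ha2 : δ1 a0 = δ1 m1 := le_antisymm (le_peak_image h1 _) ha1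
      rw [← ha0, δ1.injective ha2]
    · right
      have htop : W2 (δ2 m2) ≤ δ mh := topv _
      rw [← hb0, hi2 b0] at htop
      have hb1 : δ2 m2 ≤ δ2 b0 := hW2.le_iff_le.1 htop
      have hb2 : δ2 b0 = δ2 m2 := le_antisymm (le_peak_image h2 _) hb1
      rw [← hb0, δ2.injective hb2]
  have hfinal : (∀ d, ∀ (a : Fin k) (b : Fin l),
      (∀ j, j < d → Aseq δ1 m1 a j = Bseq δ2 m2 b j) →
      Aseq δ1 m1 a d ≠ Bseq δ2 m2 b d → (W1 a < W2 b ↔ RR a b)) →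
      ∀ (a : Fin k) (b : Fin l), (W1 a < W2 b ↔ RR a b) := by
    intro key a b
    have hnt : Aseq δ1 m1 a ≠ Bseq δ2 m2 b := no_tie h1 h2 ht1 ht2 a b
    have hex : ∃ i, Aseq δ1 m1 a i ≠ Bseq δ2 m2 b i := Function.ne_iff.1 hnt
    exact key (Nat.find hex) a b
      (fun j hj => by by_contra hc; exact Nat.find_min hex hj hc) (Nat.find_spec hex)
  rcases hdich with hmh | hmh
  · -- the peak lies in the first block
    have sm1 : ∀ a, (W1 a ≤ mh ↔ a ≤ m1) := by
      intro a; rw [hmh]; exact hW1.le_iff_le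
    have sm2 : ∀ b, (W2 b ≤ mh ↔ b < m2) := by
      intro b
      rw [hmh]
      constructor
      · intro h
        by_contra hc
        exact absurd hcond (not_lt.2 (le_trans (hW2.le_iff_le.2 (not_lt.1 hc)) h))
      · intro hb
        by_contra hc
        have hb2 : W2 b < W2 m2 := hW2 hb
        have hdec := hpk.2 (W2 b) (W2 m2) (by rw [hmh]; exact (not_le.1 hc).le) hb2
        rw [hi2, hi2] at hdec
        exact absurd (hW2.lt_iff_lt.1 hdec) (not_lt.2 (le_peak_image h2 _))
    have topJ : ∀ x, W2 x < W1 (δ1 m1) := by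
      intro x
      refine lt_of_le_of_ne ?_ (fun he => hne _ _ he.symm)
      have := topv (W2 x)
      rwa [hmh, hi1] at this
    apply hfinal
    intro d
    induction d using Nat.strong_induction_on with
    | _ d ih =>
      intro a b hp hd
      by_cases ha : a ≤ m1 <;> by_cases hb : b < m2
      · have hd0 : d ≠ 0 := by
          intro h0; subst h0
          rw [Aseq_zero, Bseq_zero, decide_eq_true ha, decide_eq_true hb] at hd
          exact hd rfl
        obtain ⟨d', rfl⟩ := Nat.exists_eq_succ_of_ne_zero hd0
        have hp' : ∀ j, j < d' → Aseq δ1 m1 (δ1 a) j = Bseq δ2 m2 (δ2 b) j := by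
          intro j hj
          have := hp (j + 1) (Nat.succ_lt_succ hj)
          rwa [Aseq_succ, Bseq_succ] at this
        have hd' : Aseq δ1 m1 (δ1 a) d' ≠ Bseq δ2 m2 (δ2 b) d' := by
          rw [← Aseq_succ, ← Bseq_succ]; exact hd
        have IH := ih d' (Nat.lt_succ_self d') (δ1 a) (δ2 b) hp' hd'
        rw [below_iff _ _ ((sm1 a).2 ha) ((sm2 b).2 hb), hi1, hi2, IH]
        exact (Rrec_AA ha hb).symm
      · refine iff_of_true ?_ (Rhead_true ha (not_lt.1 hb))
        have hA : W1 a ≤ mh := (sm1 a).2 ha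
        have hB : ¬ (W2 b ≤ mh) := fun h => hb ((sm2 b).1 h)
        exact lt_of_le_of_lt hA (not_le.1 hB)
      · refine iff_of_false ?_ (Rhead_false (not_le.1 ha) hb)
        have hB : W2 b ≤ mh := (sm2 b).2 hb
        have hA : ¬ (W1 a ≤ mh) := fun h => ha ((sm1 a).1 h)
        exact fun hlt => hA (le_of_lt (lt_of_lt_of_le hlt hB))
      · have hma : m1 < a := not_le.1 ha
        have hmb : m2 ≤ b := not_lt.1 hb
        have hd0 : d ≠ 0 := by
          intro h0; subst h0
          rw [Aseq_zero, Bseq_zero, decide_eq_false (not_le.2 hma),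
            decide_eq_false (not_lt.2 hmb)] at hd
          exact hd rfl
        obtain ⟨d', rfl⟩ := Nat.exists_eq_succ_of_ne_zero hd0
        have hp' : ∀ j, j < d' → Aseq δ1 m1 (δ1 a) j = Bseq δ2 m2 (δ2 b) j := by
          intro j hj
          have := hp (j + 1) (Nat.succ_lt_succ hj)
          rwa [Aseq_succ, Bseq_succ] at this
        have hd' : Aseq δ1 m1 (δ1 a) d' ≠ Bseq δ2 m2 (δ2 b) d' := by
          rw [← Aseq_succ, ← Bseq_succ]; exact hd
        have IH := ih d' (Nat.lt_succ_self d') (δ1 a) (δ2 b) hp' hd'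
        have hA : mh ≤ W1 a := (not_le.1 (fun h => ha ((sm1 a).1 h))).le
        have hB : mh ≤ W2 b := (not_le.1 (fun h => hb ((sm2 b).1 h))).le
        rw [above_iff _ _ hA hB, hi1, hi2, Rrec_BB h1 h2 ht1 ht2 hma hmb, ← IH]
        constructor
        · exact fun h h' => lt_asymm h h'
        · intro h
          rcases lt_or_gt_of_ne (hne (δ1 a) (δ2 b)) with h' | h'
          · exact absurd h' h
          · exact h'
  · -- the peak lies in the second block
    have sm1 : ∀ a, (W1 a ≤ mh ↔ a ≤ m1) := by
      intro a
      rw [hmh]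
      constructor
      · intro h
        by_contra hc
        have ha2 : W1 m1 < W1 a := hW1 (not_le.1 hc)
        have hinc := hpk.1 (W1 m1) (W1 a) ha2 (by rw [← hmh] at h; exact h)
        rw [hi1, hi1] at hinc
        exact absurd (hW1.lt_iff_lt.1 hinc) (not_lt.2 (le_peak_image h1 _))
      · intro ha
        exact le_of_lt (lt_of_le_of_lt (hW1.le_iff_le.2 ha) hcond)
    have sm2 : ∀ b, (W2 b ≤ mh ↔ b ≤ m2) := by
      intro b; rw [hmh]; exact hW2.le_iff_le
    have topJc : ∀ x, W1 x < W2 (δ2 m2) := by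
      intro x
      refine lt_of_le_of_ne ?_ (hne _ _)
      have := topv (W1 x)
      rwa [hmh, hi2] at this
    apply hfinal
    intro d
    induction d using Nat.strong_induction_on with
    | _ d ih =>
      intro a b hp hd
      by_cases hbm2 : b = m2
      · rw [hbm2] at hp hd ⊢
        by_cases ha : a ≤ m1
        · exact iff_of_true (lt_of_le_of_lt (hW1.le_iff_le.2 ha) hcond)
            (Rhead_true ha le_rfl)
        · have hma : m1 < a := not_le.1 ha
          have hd0 : d ≠ 0 := by
            intro h0; subst h0
            rw [Aseq_zero, Bseq_zero, decide_eq_false (not_le.2 hma),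
              decide_eq_false (lt_irrefl m2)] at hd
            exact hd rfl
          obtain ⟨d', rfl⟩ := Nat.exists_eq_succ_of_ne_zero hd0
          have hp' : ∀ j, j < d' → Aseq δ1 m1 (δ1 a) j = Bseq δ2 m2 (δ2 m2) j := by
            intro j hj
            have := hp (j + 1) (Nat.succ_lt_succ hj)
            rwa [Aseq_succ, Bseq_succ] at this
          have hd' : Aseq δ1 m1 (δ1 a) d' ≠ Bseq δ2 m2 (δ2 m2) d' := by
            rw [← Aseq_succ, ← Bseq_succ]; exact hd
          have IH := ih d' (Nat.lt_succ_self d') (δ1 a) (δ2 m2) hp' hd'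
          have hRd : RR (δ1 a) (δ2 m2) := IH.1 (topJc (δ1 a))
          refine iff_of_false ?_ ?_
          · have hA : ¬ (W1 a ≤ mh) := fun h => ha ((sm1 a).1 h)
            rw [hmh] at hA
            exact fun hlt => hA hlt.le
          · exact fun hR => (Rrec_BB h1 h2 ht1 ht2 hma le_rfl).1 hR hRd
      · by_cases ha : a ≤ m1 <;> by_cases hb : b < m2
        · have hd0 : d ≠ 0 := by
            intro h0; subst h0
            rw [Aseq_zero, Bseq_zero, decide_eq_true ha, decide_eq_true hb] at hd
            exact hd rfl
          obtain ⟨d', rfl⟩ := Nat.exists_eq_succ_of_ne_zero hd0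
          have hp' : ∀ j, j < d' → Aseq δ1 m1 (δ1 a) j = Bseq δ2 m2 (δ2 b) j := by
            intro j hj
            have := hp (j + 1) (Nat.succ_lt_succ hj)
            rwa [Aseq_succ, Bseq_succ] at this
          have hd' : Aseq δ1 m1 (δ1 a) d' ≠ Bseq δ2 m2 (δ2 b) d' := by
            rw [← Aseq_succ, ← Bseq_succ]; exact hd
          have IH := ih d' (Nat.lt_succ_self d') (δ1 a) (δ2 b) hp' hd'
          rw [below_iff _ _ ((sm1 a).2 ha) ((sm2 b).2 hb.le), hi1, hi2, IH]
          exact (Rrec_AA ha hb).symm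
        · have hmb : m2 < b := lt_of_le_of_ne (not_lt.1 hb) (Ne.symm hbm2)
          refine iff_of_true ?_ (Rhead_true ha hmb.le)
          have hA : W1 a ≤ mh := (sm1 a).2 ha
          have hB : ¬ (W2 b ≤ mh) := fun h => absurd ((sm2 b).1 h) (not_le.2 hmb)
          exact lt_of_le_of_lt hA (not_le.1 hB)
        · refine iff_of_false ?_ (Rhead_false (not_le.1 ha) hb)
          have hB : W2 b ≤ mh := (sm2 b).2 hb.le
          have hA : ¬ (W1 a ≤ mh) := fun h => ha ((sm1 a).1 h)
          exact fun hlt => hA (le_of_lt (lt_of_lt_of_le hlt hB))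
        · have hma : m1 < a := not_le.1 ha
          have hmb : m2 < b := lt_of_le_of_ne (not_lt.1 hb) (Ne.symm hbm2)
          have hd0 : d ≠ 0 := by
            intro h0; subst h0
            rw [Aseq_zero, Bseq_zero, decide_eq_false (not_le.2 hma),
              decide_eq_false (not_lt.2 hmb.le)] at hd
            exact hd rfl
          obtain ⟨d', rfl⟩ := Nat.exists_eq_succ_of_ne_zero hd0
          have hp' : ∀ j, j < d' → Aseq δ1 m1 (δ1 a) j = Bseq δ2 m2 (δ2 b) j := by
            intro j hj
            have := hp (j + 1) (Nat.succ_lt_succ hj)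
            rwa [Aseq_succ, Bseq_succ] at this
          have hd' : Aseq δ1 m1 (δ1 a) d' ≠ Bseq δ2 m2 (δ2 b) d' := by
            rw [← Aseq_succ, ← Bseq_succ]; exact hd
          have IH := ih d' (Nat.lt_succ_self d') (δ1 a) (δ2 b) hp' hd'
          have hA : mh ≤ W1 a := (not_le.1 (fun h => ha ((sm1 a).1 h))).le
          have hB : mh ≤ W2 b :=
            (not_le.1 (fun h => absurd ((sm2 b).1 h) (not_le.2 hmb))).le
          rw [above_iff _ _ hA hB, hi1, hi2, Rrec_BB h1 h2 ht1 ht2 hma hmb.le, ← IH]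
          constructor
          · exact fun h h' => lt_asymm h h'
          · intro h
            rcases lt_or_gt_of_ne (hne (δ1 a) (δ2 b)) with h' | h'
            · exact absurd h' h
            · exact h'


/-! ### From a valid `J` back to the canonical construction -/

lemma omegaMap_strictMono {n k : ℕ} (J : Finset (Fin n)) (h : J.card = k) :
    StrictMono (omegaMap J h) := fun a a' haa => by
  have h' : J.orderIsoOfFin h a < J.orderIsoOfFin h a' := (OrderIso.lt_iff_lt _).2 haa
  exact h'

lemma omegaMap_mem {n k : ℕ} (J : Finset (Fin n)) (h : J.card = k) (a : Fin k) :
    omegaMap J h a ∈ J := (J.orderIsoOfFin h a).2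

lemma omegaMap_surjOn {n k : ℕ} (J : Finset (Fin n)) (h : J.card = k) :
    ∀ p ∈ J, ∃ a, omegaMap J h a = p := by
  intro p hp
  obtain ⟨a, ha⟩ := (J.orderIsoOfFin h).surjective ⟨p, hp⟩
  exact ⟨a, congrArg Subtype.val ha⟩

lemma valid_eq (h1 : IsUnimodalPeak δ1 m1) (h2 : IsUnimodalPeak δ2 m2)
    (ht1 : IsTransitive δ1) (ht2 : IsTransitive δ2)
    {J : Finset (Fin (k + l))} (hJ : J.card = k) (hJc : Jᶜ.card = l)
    {δ : Equiv.Perm (Fin (k + l))}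
    (hi1 : ∀ a, δ (omegaMap J hJ a) = omegaMap J hJ (δ1 a))
    (hi2 : ∀ b, δ (omegaMap Jᶜ hJc b) = omegaMap Jᶜ hJc (δ2 b))
    (hu : IsUnimodal δ) (hcond : omegaMap J hJ m1 < omegaMap Jᶜ hJc m2) :
    J = Finset.univ.image PP1 := by
  have hW1 := omegaMap_strictMono J hJ
  have hW2 := omegaMap_strictMono Jᶜ hJc
  have hne : ∀ a b, omegaMap J hJ a ≠ omegaMap Jᶜ hJc b := by
    intro a b he
    have h1m := omegaMap_mem J hJ a
    have h2m := omegaMap_mem Jᶜ hJc b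
    rw [he] at h1m
    exact (Finset.mem_compl.1 h2m) h1m
  have hcov : ∀ p, (∃ a, omegaMap J hJ a = p) ∨ (∃ b, omegaMap Jᶜ hJc b = p) := by
    intro p
    by_cases hp : p ∈ J
    · exact Or.inl (omegaMap_surjOn J hJ p hp)
    · exact Or.inr (omegaMap_surjOn Jᶜ hJc p (Finset.mem_compl.2 hp))
  have hiff := core_unique h1 h2 ht1 ht2 hW1 hW2 hne hi1 hi2 hcov hu hcond
  have hval : ∀ a : Fin k, omegaMap J hJ a = PP1 a := by
    intro a
    have hlt : (Finset.univ.filter fun p => p < omegaMap J hJ a).card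
        = (omegaMap J hJ a).val := card_filter_lt _
    have hsplit := Finset.card_filter_add_card_filter_not
      (s := Finset.univ.filter fun p => p < omegaMap J hJ a) (p := fun p => p ∈ J)
    have him1 : (Finset.univ.filter fun p => p < omegaMap J hJ a).filter (fun p => p ∈ J)
        = (Finset.univ.filter fun a' => a' < a).image (omegaMap J hJ) := by
      ext p
      simp only [Finset.mem_filter, Finset.mem_univ, true_and, Finset.mem_image]
      constructor
      · rintro ⟨hplt, hpJ⟩
        obtain ⟨a', ha'⟩ := omegaMap_surjOn J hJ p hpJ
        exact ⟨a', hW1.lt_iff_lt.1 (by rw [ha']; exact hplt), ha'⟩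
      · rintro ⟨a', ha', rfl⟩
        exact ⟨hW1 ha', omegaMap_mem J hJ a'⟩
    have him2 : (Finset.univ.filter fun p => p < omegaMap J hJ a).filter (fun p => ¬ p ∈ J)
        = (Finset.univ.filter fun b => ¬ RR a b).image (omegaMap Jᶜ hJc) := by
      ext p
      simp only [Finset.mem_filter, Finset.mem_univ, true_and, Finset.mem_image]
      constructor
      · rintro ⟨hplt, hpJ⟩
        obtain ⟨b, hb⟩ := omegaMap_surjOn Jᶜ hJc p (Finset.mem_compl.2 hpJ)
        refine ⟨b, ?_, hb⟩
        intro hR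
        rw [← hb] at hplt
        exact lt_asymm hplt ((hiff a b).2 hR)
      · rintro ⟨b, hbR, rfl⟩
        refine ⟨?_, fun hmem => (Finset.mem_compl.1 (omegaMap_mem Jᶜ hJc b)) hmem⟩
        rcases lt_or_gt_of_ne (hne a b) with h' | h'
        · exact absurd ((hiff a b).1 h') hbR
        · exact h'
    have hc1 : ((Finset.univ.filter fun p => p < omegaMap J hJ a).filter
        (fun p => p ∈ J)).card = a.val := by
      rw [him1, Finset.card_image_of_injective _ hW1.injective, card_filter_lt]
    have hc2 : ((Finset.univ.filter fun p => p < omegaMap J hJ a).filter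
        (fun p => ¬ p ∈ J)).card = (Finset.univ.filter fun b => ¬ RR a b).card := by
      rw [him2, Finset.card_image_of_injective _ hW2.injective]
    apply Fin.ext
    rw [P1_val]
    calc (omegaMap J hJ a).val
        = (Finset.univ.filter fun p => p < omegaMap J hJ a).card := hlt.symm
      _ = ((Finset.univ.filter fun p => p < omegaMap J hJ a).filter (fun p => p ∈ J)).card
          + ((Finset.univ.filter fun p => p < omegaMap J hJ a).filter
            (fun p => ¬ p ∈ J)).card := hsplit.symm
      _ = a.val + (Finset.univ.filter fun b => ¬ RR a b).card := by rw [hc1, hc2]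
  have hsub : Finset.univ.image PP1 ⊆ J := by
    intro p hp
    obtain ⟨a, _, rfl⟩ := Finset.mem_image.1 hp
    rw [← hval a]
    exact omegaMap_mem J hJ a
  refine (Finset.eq_of_subset_of_card_le hsub ?_).symm
  rw [hJ, Finset.card_image_of_injective _ (P1_mono h1).injective, Finset.card_univ,
    Fintype.card_fin]

end Pos


end Thm3


/-- Theorem 3: for transitive unimodal `δ₁ ∈ Δ_k`, `δ₂ ∈ Δ_ℓ` with peaks
`m₁, m₂`, there is exactly one subset `J ⊆ {1,...,k+ℓ}` of cardinality `k`
such that the intertwined sum `δ₁ ⊕_J δ₂` is unimodal and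
`Ω_J(m₁) < Ω̄_J(m₂)`. -/
theorem theorem_three (k l : ℕ) (δ1 : Equiv.Perm (Fin k)) (δ2 : Equiv.Perm (Fin l))
    (m1 : Fin k) (m2 : Fin l)
    (h1 : IsUnimodalPeak δ1 m1) (h2 : IsUnimodalPeak δ2 m2)
    (ht1 : IsTransitive δ1) (ht2 : IsTransitive δ2) :
    ∃! J : Finset (Fin (k + l)),
      ∃ (hJ : J.card = k) (hJc : Jᶜ.card = l) (δ : Equiv.Perm (Fin (k + l))),
        (∀ a : Fin k, δ (omegaMap J hJ a) = omegaMap J hJ (δ1 a)) ∧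
        (∀ b : Fin l, δ (omegaMap Jᶜ hJc b) = omegaMap Jᶜ hJc (δ2 b)) ∧
        IsUnimodal δ ∧ omegaMap J hJ m1 < omegaMap Jᶜ hJc m2 := by
  classical
  refine ⟨Finset.univ.image (Thm3.P1 δ1 δ2 m1 m2), ?_, ?_⟩
  · have hJ : (Finset.univ.image (Thm3.P1 δ1 δ2 m1 m2)).card = k := by
      rw [Finset.card_image_of_injective _ (Thm3.P1_mono h1).injective,
        Finset.card_univ, Fintype.card_fin]
    have hcompl : (Finset.univ.image (Thm3.P1 δ1 δ2 m1 m2))ᶜ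
        = Finset.univ.image (Thm3.P2 δ1 δ2 m1 m2) := by
      ext p
      simp only [Finset.mem_compl, Finset.mem_image, Finset.mem_univ, true_and]
      constructor
      · intro hp
        rcases Thm3.cover h1 h2 p with ⟨a, ha⟩ | ⟨b, hb⟩
        · exact absurd ⟨a, ha⟩ hp
        · exact ⟨b, hb⟩
      · rintro ⟨b, rfl⟩ ⟨a, ha⟩
        exact Thm3.P1_ne_P2 h1 h2 a b ha
    have hJc : (Finset.univ.image (Thm3.P1 δ1 δ2 m1 m2))ᶜ.card = l := by
      rw [hcompl, Finset.card_image_of_injective _ (Thm3.P2_mono h2).injective,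
        Finset.card_univ, Fintype.card_fin]
    have hueq1 := Finset.orderEmbOfFin_unique hJ
      (f := Thm3.P1 δ1 δ2 m1 m2)
      (fun x => Finset.mem_image_of_mem _ (Finset.mem_univ x)) (Thm3.P1_mono h1)
    have ho1 : ∀ a, omegaMap _ hJ a = Thm3.P1 δ1 δ2 m1 m2 a := by
      intro a
      exact (Finset.coe_orderIsoOfFin_apply _ _ _).trans (congrFun hueq1 a).symm
    have hueq2 := Finset.orderEmbOfFin_unique hJc
      (f := Thm3.P2 δ1 δ2 m1 m2)
      (fun x => by
        rw [hcompl]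
        exact Finset.mem_image_of_mem _ (Finset.mem_univ x)) (Thm3.P2_mono h2)
    have ho2 : ∀ b, omegaMap _ hJc b = Thm3.P2 δ1 δ2 m1 m2 b := by
      intro b
      exact (Finset.coe_orderIsoOfFin_apply _ _ _).trans (congrFun hueq2 b).symm
    refine ⟨hJ, hJc, Thm3.mergedPerm h1 h2, ?_, ?_, ?_, ?_⟩
    · intro a
      rw [ho1 a, ho1 (δ1 a)]
      exact Thm3.mergedPerm_P1 h1 h2 a
    · intro b
      rw [ho2 b, ho2 (δ2 b)]
      exact Thm3.mergedPerm_P2 h1 h2 b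
    · by_cases hQ : Thm3.Rrel δ1 δ2 m1 m2 (δ1 m1) (δ2 m2)
      · exact ⟨_, Thm3.unimodal_Q h1 h2 ht1 ht2 hQ⟩
      · exact ⟨_, Thm3.unimodal_notQ h1 h2 ht1 ht2 hQ⟩
    · rw [ho1 m1, ho2 m2]
      exact Thm3.P1_lt_P2 h1 h2 Thm3.Rpeak
  · rintro J' ⟨hJ', hJc', δ', hi1', hi2', hu', hcond'⟩
    exact Thm3.valid_eq h1 h2 ht1 ht2 hJ' hJc' hi1' hi2' hu' hcond'
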